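/- Let k be an algebraically closed field of characteristic p > 0 and let ℓ be a prime with ℓ ≠ p. Let H be a finite subgroup of PGL₂(k) whose order is a power of ℓ. Then H is cyclic, or ℓ = 2 and H is isomorphic to a dihedral group of order a power of 2. -/

import Mathlib

open Matrix

/-- `PGL₂(k)`: the quotient of `GL₂(k)` by its center. -/
abbrev PGL2 (k : Type*) [Field k] : Type _ :=
  GL (Fin 2) k ⧸ Subgroup.center (GL (Fin 2) k)

namespace PGL2Aux

variable {k : Type*} [Field k]

/-- scalar units in GL₂ -/
noncomputable def sHom : kˣ →* GL (Fin 2) k :=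
  Units.map (Matrix.scalar (Fin 2) : k →+* Matrix (Fin 2) (Fin 2) k).toMonoidHom

lemma sHom_val (c : kˣ) : (sHom c : Matrix (Fin 2) (Fin 2) k) = (c : k) • 1 := by
  simp [sHom, Matrix.scalar, smul_eq_diagonal_mul]

lemma scalar_mul_comm (c : k) (M : Matrix (Fin 2) (Fin 2) k) :
    M * (c • 1) = (c • 1) * M := by
  rw [Matrix.mul_smul, Matrix.smul_mul, mul_one, one_mul]

lemma sHom_mem_center (c : kˣ) : sHom c ∈ Subgroup.center (GL (Fin 2) k) := by
  rw [Subgroup.mem_center_iff]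
  intro g
  ext i j
  have : (g : Matrix (Fin 2) (Fin 2) k) * ((c : k) • 1) = ((c : k) • 1) * g :=
    scalar_mul_comm _ _
  simp only [Units.val_mul, sHom_val]
  rw [this]

/-- a 2×2 matrix commuting with the two standard unipotents is scalar -/
lemma scalar_of_comm (M : Matrix (Fin 2) (Fin 2) k)
    (h1 : M * !![1,1;0,1] = !![1,1;0,1] * M)
    (h2 : M * !![1,0;1,1] = !![1,0;1,1] * M) :
    M = M 0 0 • 1 := by
  have e1 := congrFun (congrFun h1 0) 0
  have e2 := congrFun (congrFun h1 0) 1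
  have e3 := congrFun (congrFun h2 0) 0
  simp [Matrix.mul_apply, Fin.sum_univ_two] at e1 e2 e3
  ext i j
  fin_cases i <;> fin_cases j <;>
    simp [Matrix.one_apply] <;>
    first
    | exact e3
    | exact e1
    | linear_combination -e2

end PGL2Aux

namespace PGL2Aux

variable {k : Type*} [Field k]

noncomputable def E1 : GL (Fin 2) k :=
  ⟨!![1,1;0,1], !![1,-1;0,1], by simp [Matrix.mul_fin_two, ← Matrix.one_fin_two], by
    simp [Matrix.mul_fin_two, ← Matrix.one_fin_two]⟩

noncomputable def E2 : GL (Fin 2) k :=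
  ⟨!![1,0;1,1], !![1,0;-1,1], by simp [Matrix.mul_fin_two, ← Matrix.one_fin_two], by
    simp [Matrix.mul_fin_two, ← Matrix.one_fin_two]⟩

lemma GL_ne_zero (A : GL (Fin 2) k) (c : k)
    (h : (A : Matrix (Fin 2) (Fin 2) k) = c • 1) : c ≠ 0 := by
  intro hc
  subst hc
  have h2 := A.mul_inv
  rw [h] at h2
  simp only [zero_smul, Matrix.zero_mul] at h2
  have := congrFun (congrFun h2 0) 0
  simp [Matrix.one_apply] at this

lemma center_is_scalar (A : GL (Fin 2) k)
    (hA : A ∈ Subgroup.center (GL (Fin 2) k)) :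
    ∃ c : kˣ, A = sHom c := by
  rw [Subgroup.mem_center_iff] at hA
  have h1 : !![1,1;0,1] * (A : Matrix (Fin 2) (Fin 2) k) = (A : Matrix (Fin 2) (Fin 2) k) * !![1,1;0,1] :=
    congrArg Units.val (hA E1)
  have h2 : !![1,0;1,1] * (A : Matrix (Fin 2) (Fin 2) k) = (A : Matrix (Fin 2) (Fin 2) k) * !![1,0;1,1] :=
    congrArg Units.val (hA E2)
  have hs : (A : Matrix (Fin 2) (Fin 2) k) = (A : Matrix (Fin 2) (Fin 2) k) 0 0 • 1 :=
    scalar_of_comm _ h1.symm h2.symm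
  have hc : (A : Matrix (Fin 2) (Fin 2) k) 0 0 ≠ 0 := GL_ne_zero A _ hs
  refine ⟨Units.mk0 _ hc, ?_⟩
  ext i j
  rw [sHom_val]
  exact congrFun (congrFun hs i) j

end PGL2Aux

namespace PGL2Aux

variable {k : Type*} [Field k]

/-- the projection -/
noncomputable def mk : GL (Fin 2) k → PGL2 k := QuotientGroup.mk

lemma mk_mul (A B : GL (Fin 2) k) : mk (A * B) = mk A * mk B := rfl

lemma mk_one : (mk (1 : GL (Fin 2) k)) = 1 := rfl

lemma mk_pow (A : GL (Fin 2) k) (n : ℕ) : mk (A ^ n) = (mk A) ^ n := by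
  induction n with
  | zero => simp [pow_succ, mk_one]
  | succ n ih => rw [pow_succ, pow_succ, mk_mul, ih]

lemma mk_inv (A : GL (Fin 2) k) : mk A⁻¹ = (mk A)⁻¹ := rfl

lemma mk_surjective : Function.Surjective (mk : GL (Fin 2) k → PGL2 k) :=
  QuotientGroup.mk_surjective

lemma mk_eq_mk_iff (A B : GL (Fin 2) k) :
    mk A = mk B ↔ ∃ c : k, c ≠ 0 ∧
      (B : Matrix (Fin 2) (Fin 2) k) = c • (A : Matrix (Fin 2) (Fin 2) k) := by
  constructor
  · intro h
    rw [mk, QuotientGroup.eq] at h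
    obtain ⟨c, hc⟩ := center_is_scalar _ h
    refine ⟨c, c.ne_zero, ?_⟩
    have : A * (A⁻¹ * B) = B := by group
    rw [hc] at this
    have := congrArg Units.val this
    rw [Units.val_mul, sHom_val] at this
    rw [← this, Matrix.mul_smul, mul_one]
  · rintro ⟨c, hc, hBA⟩
    rw [mk, QuotientGroup.eq]
    have hval : ((A⁻¹ * B : GL (Fin 2) k) : Matrix (Fin 2) (Fin 2) k) = c • 1 := by
      rw [Units.val_mul, hBA, Matrix.mul_smul]
      have : ((A⁻¹ : GL (Fin 2) k) : Matrix (Fin 2) (Fin 2) k) * A = 1 := A.inv_mul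
      rw [this]
    have : A⁻¹ * B = sHom (Units.mk0 c hc) := by
      ext i j
      rw [sHom_val, hval]
      norm_num
    rw [this]
    exact sHom_mem_center _
  
lemma mk_eq_one_iff (A : GL (Fin 2) k) :
    mk A = 1 ↔ ∃ c : k, c ≠ 0 ∧ (A : Matrix (Fin 2) (Fin 2) k) = c • 1 := by
  have := mk_eq_mk_iff (1 : GL (Fin 2) k) A
  rw [mk_one] at this
  rw [eq_comm, this]
  simp [Units.val_one]

/-- the ratio of the diagonal entries, an invariant of the projective class -/
noncomputable def ratio (x : PGL2 k) : k :=
  Quotient.liftOn' x (fun M => (M : Matrix (Fin 2) (Fin 2) k) 0 0 *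
      ((M : Matrix (Fin 2) (Fin 2) k) 1 1)⁻¹) (by
    intro a b hab
    rw [QuotientGroup.leftRel_apply] at hab
    obtain ⟨c, hc⟩ := center_is_scalar _ hab
    have : b = a * sHom c := by rw [← hc]; group
    have hval := congrArg Units.val this
    rw [Units.val_mul, sHom_val, Matrix.mul_smul, mul_one] at hval
    simp only [hval, Matrix.smul_apply, smul_eq_mul]
    rw [mul_inv]
    have hcc : (c : k) * ((c : k))⁻¹ = 1 := mul_inv_cancel₀ c.ne_zero
    linear_combination -((↑a : Matrix (Fin 2) (Fin 2) k) 0 0 *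
      (((↑a : Matrix (Fin 2) (Fin 2) k) 1 1)⁻¹)) * hcc)

lemma ratio_mk (M : GL (Fin 2) k) :
    ratio (mk M) = (M : Matrix (Fin 2) (Fin 2) k) 0 0 *
      ((M : Matrix (Fin 2) (Fin 2) k) 1 1)⁻¹ := rfl

end PGL2Aux

namespace PGL2Aux

variable {k : Type*} [Field k]

def DiagCl (x : PGL2 k) : Prop :=
  ∃ M : GL (Fin 2) k, mk M = x ∧ (M : Matrix (Fin 2) (Fin 2) k) 0 1 = 0 ∧
    (M : Matrix (Fin 2) (Fin 2) k) 1 0 = 0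

def ADiagCl (x : PGL2 k) : Prop :=
  ∃ M : GL (Fin 2) k, mk M = x ∧ (M : Matrix (Fin 2) (Fin 2) k) 0 0 = 0 ∧
    (M : Matrix (Fin 2) (Fin 2) k) 1 1 = 0

lemma mul_entry (M N : GL (Fin 2) k) (i j : Fin 2) :
    ((M * N : GL (Fin 2) k) : Matrix (Fin 2) (Fin 2) k) i j =
      (M : Matrix (Fin 2) (Fin 2) k) i 0 * (N : Matrix (Fin 2) (Fin 2) k) 0 j +
      (M : Matrix (Fin 2) (Fin 2) k) i 1 * (N : Matrix (Fin 2) (Fin 2) k) 1 j := by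
  rw [Units.val_mul, Matrix.mul_apply, Fin.sum_univ_two]

lemma det_ne_zero (M : GL (Fin 2) k) :
    (M : Matrix (Fin 2) (Fin 2) k) 0 0 * (M : Matrix (Fin 2) (Fin 2) k) 1 1 -
      (M : Matrix (Fin 2) (Fin 2) k) 0 1 * (M : Matrix (Fin 2) (Fin 2) k) 1 0 ≠ 0 := by
  rw [← Matrix.det_fin_two]
  have : IsUnit ((M : Matrix (Fin 2) (Fin 2) k).det) :=
    (Matrix.isUnit_iff_isUnit_det _).mp M.isUnit
  exact this.ne_zero

lemma diag_one : DiagCl (1 : PGL2 k) :=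
  ⟨1, mk_one, by simp, by simp⟩

lemma diag_mul {x y : PGL2 k} (hx : DiagCl x) (hy : DiagCl y) : DiagCl (x * y) := by
  obtain ⟨M, rfl, hM1, hM2⟩ := hx
  obtain ⟨N, rfl, hN1, hN2⟩ := hy
  exact ⟨M * N, rfl, by rw [mul_entry, hM1, hN1]; ring, by rw [mul_entry, hM2, hN2]; ring⟩

lemma diag_inv {x : PGL2 k} (hx : DiagCl x) : DiagCl x⁻¹ := by
  obtain ⟨M, rfl, hM1, hM2⟩ := hx
  refine ⟨M⁻¹, rfl, ?_, ?_⟩ <;>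
  · rw [Matrix.GeneralLinearGroup.coe_inv, Matrix.inv_def, Matrix.adjugate_fin_two]
    simp [hM1, hM2]

lemma adiag_mul_adiag {x y : PGL2 k} (hx : ADiagCl x) (hy : ADiagCl y) : DiagCl (x * y) := by
  obtain ⟨M, rfl, hM1, hM2⟩ := hx
  obtain ⟨N, rfl, hN1, hN2⟩ := hy
  exact ⟨M * N, rfl, by rw [mul_entry, hM1, hN2]; ring, by rw [mul_entry, hM2, hN1]; ring⟩

lemma not_diag_and_adiag {x : PGL2 k} (hx : DiagCl x) (hy : ADiagCl x) : False := by
  obtain ⟨M, hMx, hM1, hM2⟩ := hx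
  obtain ⟨N, hNx, hN1, hN2⟩ := hy
  rw [← hNx] at hMx
  obtain ⟨c, hc, hMN⟩ := (mk_eq_mk_iff N M).mp hMx.symm
  have e00 : (M : Matrix (Fin 2) (Fin 2) k) 0 0 = c * (N : Matrix (Fin 2) (Fin 2) k) 0 0 :=
    congrFun (congrFun hMN 0) 0
  have e11 : (M : Matrix (Fin 2) (Fin 2) k) 1 1 = c * (N : Matrix (Fin 2) (Fin 2) k) 1 1 :=
    congrFun (congrFun hMN 1) 1
  apply det_ne_zero M
  rw [hM1, hM2, e00, e11, hN1, hN2]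
  ring

/-- an antidiagonal class squares to 1 -/
lemma adiag_sq {x : PGL2 k} (hx : ADiagCl x) : x * x = 1 := by
  obtain ⟨M, rfl, hM1, hM2⟩ := hx
  rw [← mk_mul, mk_eq_one_iff]
  have h01 : (M : Matrix (Fin 2) (Fin 2) k) 0 1 ≠ 0 := by
    intro h
    apply det_ne_zero M; rw [hM1, hM2, h]; ring
  have h10 : (M : Matrix (Fin 2) (Fin 2) k) 1 0 ≠ 0 := by
    intro h
    apply det_ne_zero M; rw [hM1, hM2, h]; ring
  refine ⟨(M : Matrix (Fin 2) (Fin 2) k) 0 1 * (M : Matrix (Fin 2) (Fin 2) k) 1 0,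
    mul_ne_zero h01 h10, ?_⟩
  ext i j
  fin_cases i <;> fin_cases j <;>
    simp only [mul_entry, Matrix.smul_apply, Matrix.one_apply, smul_eq_mul] <;>
    norm_num [hM1, hM2] <;> ring

end PGL2Aux

namespace PGL2Aux

variable {k : Type*} [Field k]

lemma diag_entries_ne_zero {M : GL (Fin 2) k}
    (hM1 : (M : Matrix (Fin 2) (Fin 2) k) 0 1 = 0)
    (hM2 : (M : Matrix (Fin 2) (Fin 2) k) 1 0 = 0) :
    (M : Matrix (Fin 2) (Fin 2) k) 0 0 ≠ 0 ∧ (M : Matrix (Fin 2) (Fin 2) k) 1 1 ≠ 0 := by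
  have h := det_ne_zero M
  rw [hM1, hM2] at h
  simp only [mul_zero, sub_zero] at h
  exact ⟨fun h0 => h (by rw [h0]; ring), fun h0 => h (by rw [h0]; ring)⟩

lemma isCyclic_aux {G : Type*} [Group G] [Finite G] (f : G →* PGL2 k)
    (hinj : Function.Injective f) (hd : ∀ g, DiagCl (f g)) : IsCyclic G := by
  have hmul : ∀ g h : G, ratio (f (g * h)) = ratio (f g) * ratio (f h) := by
    intro g h
    obtain ⟨M, hM, hM1, hM2⟩ := hd g
    obtain ⟨N, hN, hN1, hN2⟩ := hd h
    rw [_root_.map_mul, ← hM, ← hN, ← mk_mul, ratio_mk, ratio_mk, ratio_mk]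
    rw [mul_entry, mul_entry, hM1, hM2, hN1, hN2]
    first
    | (ring_nf; rw [mul_inv]; ring)
    | (simp only [mul_zero, zero_mul, add_zero, zero_add]; rw [mul_inv]; ring)
  let ψ : G →* k := {
    toFun := fun g => ratio (f g)
    map_one' := by
      show ratio (f 1) = 1
      rw [_root_.map_one]
      have : (1 : PGL2 k) = mk 1 := rfl
      rw [this, ratio_mk]
      simp
    map_mul' := hmul }
  apply isCyclic_of_subgroup_isDomain ψ
  intro g h hgh
  have hne : ∀ g : G, ratio (f g) ≠ 0 := by
    intro g
    obtain ⟨M, hM, hM1, hM2⟩ := hd g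
    obtain ⟨ha, hb⟩ := diag_entries_ne_zero hM1 hM2
    rw [← hM, ratio_mk]
    exact mul_ne_zero ha (inv_ne_zero hb)
  -- show ψ (g * h⁻¹) = 1 and conclude
  have key : ∀ u : G, ratio (f u) = 1 → u = 1 := by
    intro u hu
    obtain ⟨M, hM, hM1, hM2⟩ := hd u
    obtain ⟨ha, hb⟩ := diag_entries_ne_zero hM1 hM2
    rw [← hM, ratio_mk] at hu
    have heq : (M : Matrix (Fin 2) (Fin 2) k) 0 0 = (M : Matrix (Fin 2) (Fin 2) k) 1 1 := by
      field_simp at hu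
      exact hu
    apply hinj
    rw [_root_.map_one]
    have : f u = mk M := hM.symm
    rw [this]
    rw [mk_eq_one_iff]
    refine ⟨(M : Matrix (Fin 2) (Fin 2) k) 0 0, ha, ?_⟩
    ext i j
    fin_cases i <;> fin_cases j <;>
      simp only [Matrix.smul_apply, Matrix.one_apply, smul_eq_mul] <;>
      norm_num [hM1, hM2, heq]
  have h1 : ψ (g * h⁻¹) = 1 := by
    have hinvr : ψ h * ψ h⁻¹ = 1 := by
      have : ψ (h * h⁻¹) = 1 := by rw [mul_inv_cancel]; exact ψ.map_one
      rw [← ψ.map_mul]; exact this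
    show ratio (f (g * h⁻¹)) = 1
    rw [hmul]
    show ψ g * ψ h⁻¹ = 1
    rw [hgh]
    exact hinvr
  exact mul_inv_eq_one.mp (key _ h1)

end PGL2Aux

namespace PGL2Aux

variable {k : Type*} [Field k]

lemma diagonalize [IsAlgClosed k] (l : ℕ) (hl0 : l ≠ 0) (hlk : (l : k) ≠ 0)
    (B : GL (Fin 2) k) (hBl : B ^ l = 1)
    (hBns : ∀ c : k, (B : Matrix (Fin 2) (Fin 2) k) ≠ c • 1) :
    ∃ (P : GL (Fin 2) k) (a b : k), a ≠ 0 ∧ b ≠ 0 ∧ a ≠ b ∧ a ^ l = 1 ∧ b ^ l = 1 ∧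
      ((P⁻¹ * B * P : GL (Fin 2) k) : Matrix (Fin 2) (Fin 2) k) = Matrix.diagonal ![a, b] := by
  set M : Matrix (Fin 2) (Fin 2) k := (B : Matrix (Fin 2) (Fin 2) k) with hM
  set t : k := M 0 0 + M 1 1 with ht
  set d : k := M 0 0 * M 1 1 - M 0 1 * M 1 0 with hd
  have hdne : d ≠ 0 := det_ne_zero B
  -- a root of the characteristic polynomial
  obtain ⟨a, hroot⟩ : ∃ a : k, a * a - t * a + d = 0 := by
    obtain ⟨a, ha⟩ := IsAlgClosed.exists_root
      (Polynomial.X ^ 2 - Polynomial.C t * Polynomial.X + Polynomial.C d) (by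
        intro hdeg
        have : (Polynomial.X ^ 2 - Polynomial.C t * Polynomial.X + Polynomial.C d).degree = 2 := by
          compute_degree!
        rw [hdeg] at this
        norm_num at this)
    refine ⟨a, ?_⟩
    have := ha
    simp only [Polynomial.IsRoot, Polynomial.eval_add, Polynomial.eval_sub, Polynomial.eval_pow,
      Polynomial.eval_mul, Polynomial.eval_X, Polynomial.eval_C] at this
    linear_combination this
  set b : k := t - a with hb
  have hdab : d = a * b := by rw [hb]; linear_combination hroot
  have ha0 : a ≠ 0 := fun h => hdne (by rw [hdab, h, zero_mul])
  have hb0 : b ≠ 0 := fun h => hdne (by rw [hdab, h, mul_zero])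
  -- Cayley-Hamilton factored
  have hfact : (M - a • 1) * (M - b • 1) = 0 := by
    ext i j
    fin_cases i <;> fin_cases j <;>
      simp only [Matrix.mul_apply, Fin.sum_univ_two, Matrix.sub_apply, Matrix.smul_apply,
        Matrix.one_apply, Matrix.zero_apply, smul_eq_mul] <;>
      norm_num <;>
      [skip; (rw [hb]; ring); (rw [hb]; ring); skip] <;>
      · rw [hb]; linear_combination -hroot
  have hfact2 : (M - b • 1) * (M - a • 1) = 0 := by
    ext i j
    fin_cases i <;> fin_cases j <;>
      simp only [Matrix.mul_apply, Fin.sum_univ_two, Matrix.sub_apply, Matrix.smul_apply,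
        Matrix.one_apply, Matrix.zero_apply, smul_eq_mul] <;>
      norm_num <;>
      [skip; (rw [hb]; ring); (rw [hb]; ring); skip] <;>
      · rw [hb]; linear_combination -hroot
  have hMpow : M ^ l = 1 := by
    have := congrArg Units.val hBl
    rwa [Units.val_pow_eq_pow_val, Units.val_one] at this
  by_cases hab : a = b
  · -- double root: contradiction with non-scalarity
    exfalso
    set N : Matrix (Fin 2) (Fin 2) k := M - a • 1 with hN
    have hN2 : N * N = 0 := by rw [hN]; nth_rewrite 2 [hab]; exact hfact
    have hMN : M = a • 1 + N := by rw [hN]; abel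
    have key : ∀ m : ℕ, M ^ (m + 1) = (a ^ (m + 1)) • 1 + (((m + 1 : ℕ) : k) * a ^ m) • N := by
      intro m
      induction m with
      | zero => simp [hMN]
      | succ m ih =>
        rw [pow_succ, ih, hMN]
        simp only [add_mul, mul_add, Matrix.smul_mul, Matrix.mul_smul, one_mul, mul_one,
          smul_smul, hN2, smul_zero, add_zero]
        match_scalars <;> push_cast <;> ring
    obtain ⟨m, rfl⟩ : ∃ m, l = m + 1 := ⟨l - 1, (Nat.succ_pred_eq_of_pos (Nat.pos_of_ne_zero hl0)).symm⟩
    have e := key m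
    rw [hMpow] at e
    have hu : ((m + 1 : ℕ) : k) * a ^ m ≠ 0 := mul_ne_zero (by exact_mod_cast hlk) (pow_ne_zero _ ha0)
    have hcN : (((m + 1 : ℕ) : k) * a ^ m) • N = (1 - a ^ (m + 1)) • (1 : Matrix (Fin 2) (Fin 2) k) := by
      have h3 := e.symm
      rw [sub_smul, one_smul]
      rw [eq_comm, ← sub_eq_iff_eq_add'] at h3
      rw [← h3]
    have hNs : N = ((((m + 1 : ℕ) : k) * a ^ m)⁻¹ * (1 - a ^ (m + 1))) • (1 : Matrix (Fin 2) (Fin 2) k) := by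
      calc N = (((m + 1 : ℕ) : k) * a ^ m)⁻¹ • ((((m + 1 : ℕ) : k) * a ^ m) • N) := by
              rw [smul_smul, inv_mul_cancel₀ hu, one_smul]
        _ = (((m + 1 : ℕ) : k) * a ^ m)⁻¹ • ((1 - a ^ (m + 1)) • (1 : Matrix (Fin 2) (Fin 2) k)) := by
              rw [hcN]
        _ = ((((m + 1 : ℕ) : k) * a ^ m)⁻¹ * (1 - a ^ (m + 1))) • 1 := by rw [smul_smul]
    apply hBns (a + (((m + 1 : ℕ) : k) * a ^ m)⁻¹ * (1 - a ^ (m + 1)))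
    rw [hMN, hNs, add_smul]
  · -- distinct roots: build eigenvector matrix
    have hMb : M - b • 1 ≠ 0 := by
      intro h
      exact hBns b (by rw [← sub_eq_zero]; exact h)
    have hMa : M - a • 1 ≠ 0 := by
      intro h
      exact hBns a (by rw [← sub_eq_zero]; exact h)
    -- column of M - b•1 gives eigenvector for a
    obtain ⟨i0, j0, hij0⟩ : ∃ i j, (M - b • 1) i j ≠ 0 := by
      by_contra h
      push_neg at h
      exact hMb (by ext i j; exact h i j)
    obtain ⟨i1, j1, hij1⟩ : ∃ i j, (M - a • 1) i j ≠ 0 := by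
      by_contra h
      push_neg at h
      exact hMa (by ext i j; exact h i j)
    set u : Fin 2 → k := fun i => (M - b • 1) i j0 with hu
    set w : Fin 2 → k := fun i => (M - a • 1) i j1 with hw
    have hu0 : u i0 ≠ 0 := hij0
    have hw0 : w i1 ≠ 0 := hij1
    have hMu : ∀ i, M i 0 * u 0 + M i 1 * u 1 = a * u i := by
      intro i
      have h := congrFun (congrFun hfact i) j0
      rw [Matrix.mul_apply, Fin.sum_univ_two] at h
      simp only [hu]
      simp only [Matrix.sub_apply, Matrix.smul_apply, Matrix.one_apply, smul_eq_mul,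
        Matrix.zero_apply] at h ⊢
      fin_cases i <;> fin_cases j0 <;> norm_num at h ⊢ <;>
        first
        | linear_combination h
        | linear_combination -h
    have hMw : ∀ i, M i 0 * w 0 + M i 1 * w 1 = b * w i := by
      intro i
      have h := congrFun (congrFun hfact2 i) j1
      rw [Matrix.mul_apply, Fin.sum_univ_two] at h
      simp only [hw]
      simp only [Matrix.sub_apply, Matrix.smul_apply, Matrix.one_apply, smul_eq_mul,
        Matrix.zero_apply] at h ⊢
      fin_cases i <;> fin_cases j1 <;> norm_num at h ⊢ <;>
        first
        | linear_combination h
        | linear_combination -h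
    -- linear independence
    have hdet : u 0 * w 1 - w 0 * u 1 ≠ 0 := by
      intro h0
      have hprop : (∀ i, w i = (w 0 / u 0) * u i) ∨ (∀ i, w i = (w 1 / u 1) * u i) := by
        by_cases hcu : u 0 ≠ 0
        · refine Or.inl fun i => ?_
          fin_cases i
          · simp only [Fin.zero_eta, Fin.mk_one]; field_simp
          · simp only [Fin.zero_eta, Fin.mk_one]; field_simp
            first
            | linear_combination h0
            | linear_combination -h0
        · push_neg at hcu
          have hcu1 : u 1 ≠ 0 := by
            intro h1
            apply hu0
            fin_cases i0 <;> assumption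
          refine Or.inr fun i => ?_
          have hw00 : w 0 = 0 := by
            rw [hcu] at h0
            simp only [zero_mul, zero_sub, neg_eq_zero] at h0
            rcases mul_eq_zero.mp h0 with h | h
            · exact h
            · exact absurd h hcu1
          fin_cases i
          · simp [hcu, hw00]
          · simp only [Fin.zero_eta, Fin.mk_one]; field_simp
      have contra : ∀ r : k, (∀ i, w i = r * u i) → False := by
        intro r hr
        have hba : ∀ i, b * w i = a * w i := by
          intro i
          rw [hr i]
          have h1 := hMw i
          rw [hr 0, hr 1, hr i] at h1
          have h2 := hMu i
          first
          | linear_combination h1 - r * h2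
          | linear_combination r * h2 - h1
          | linear_combination h1 + r * h2
          | linear_combination - h1 - r * h2
        have hz := hba i1
        have : (b - a) * w i1 = 0 := by linear_combination hz
        rcases mul_eq_zero.mp this with h | h
        · exact hab (show a = b by linear_combination -h)
        · exact hw0 h
      rcases hprop with hr | hr
      · exact contra _ hr
      · exact contra _ hr
    -- the eigenvector matrix
    set Pm : Matrix (Fin 2) (Fin 2) k := !![u 0, w 0; u 1, w 1] with hPm
    have hPdet : IsUnit Pm.det := by
      rw [isUnit_iff_ne_zero, hPm, Matrix.det_fin_two_of]
      intro h
      exact hdet (by linear_combination h)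
    set P : GL (Fin 2) k := ⟨Pm, Pm⁻¹, Matrix.mul_nonsing_inv Pm hPdet,
      Matrix.nonsing_inv_mul Pm hPdet⟩ with hP
    have hMP : M * Pm = Pm * Matrix.diagonal ![a, b] := by
      ext i j
      rw [Matrix.mul_apply, Fin.sum_univ_two, Matrix.mul_diagonal]
      fin_cases i <;> fin_cases j <;>
        simp only [hPm, Matrix.cons_val', Matrix.cons_val_zero, Matrix.cons_val_one,
          Matrix.head_cons, Matrix.head_fin_const, Matrix.of_apply, Matrix.empty_val',
          Matrix.cons_val_fin_one] <;>
        norm_num <;>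
        first
        | linear_combination hMu 0
        | linear_combination hMu 1
        | linear_combination hMw 0
        | linear_combination hMw 1
        | (rw [mul_comm]; first
            | linear_combination hMu 0
            | linear_combination hMu 1
            | linear_combination hMw 0
            | linear_combination hMw 1)
    have hconj : ((P⁻¹ * B * P : GL (Fin 2) k) : Matrix (Fin 2) (Fin 2) k) =
        Matrix.diagonal ![a, b] := by
      have hval : ((P⁻¹ * B * P : GL (Fin 2) k) : Matrix (Fin 2) (Fin 2) k) =
          Pm⁻¹ * (M * Pm) := by
        rw [Units.val_mul, Units.val_mul, Matrix.mul_assoc]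
        rfl
      rw [hval, hMP, ← Matrix.mul_assoc, Matrix.nonsing_inv_mul Pm hPdet, Matrix.one_mul]
    have hDl : (Matrix.diagonal ![a, b]) ^ l = 1 := by
      have h1 : (P⁻¹ * B * P) ^ l = 1 := by
        have h2 : (P⁻¹ * B * P) ^ l = P⁻¹ * B ^ l * P := by
          have h3 := conj_pow (i := l) (a := P⁻¹) (b := B)
          rw [inv_inv] at h3
          exact h3
        rw [h2, hBl, mul_one, inv_mul_cancel]
      have := congrArg Units.val h1
      rw [Units.val_pow_eq_pow_val, hconj] at this
      rw [this]
      rfl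
    rw [Matrix.diagonal_pow] at hDl
    have hal : a ^ l = 1 := by
      have := congrFun (congrFun hDl 0) 0
      rwa [Matrix.diagonal_apply_eq, Matrix.one_apply_eq, Pi.pow_apply] at this
    have hbl : b ^ l = 1 := by
      have := congrFun (congrFun hDl 1) 1
      rwa [Matrix.diagonal_apply_eq, Matrix.one_apply_eq, Pi.pow_apply] at this
    exact ⟨P, a, b, ha0, hb0, hab, hal, hbl, hconj⟩

end PGL2Aux

namespace PGL2Aux

variable {k : Type*} [Field k]

lemma centralizer_step {a b : k} (hab : a ≠ b)
    {Dg : GL (Fin 2) k} (hD : (Dg : Matrix (Fin 2) (Fin 2) k) = Matrix.diagonal ![a, b])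
    {M : GL (Fin 2) k} (hcomm : mk M * mk Dg = mk Dg * mk M) :
    ((M : Matrix (Fin 2) (Fin 2) k) 0 1 = 0 ∧ (M : Matrix (Fin 2) (Fin 2) k) 1 0 = 0) ∨
    ((M : Matrix (Fin 2) (Fin 2) k) 0 0 = 0 ∧ (M : Matrix (Fin 2) (Fin 2) k) 1 1 = 0 ∧
      b = -a) := by
  rw [← mk_mul, ← mk_mul, mk_eq_mk_iff] at hcomm
  obtain ⟨c, hc, hMD⟩ := hcomm
  have E : ∀ i j, ![a, b] i * (M : Matrix (Fin 2) (Fin 2) k) i j =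
      c * ((M : Matrix (Fin 2) (Fin 2) k) i j * ![a, b] j) := by
    intro i j
    have h := congrFun (congrFun hMD i) j
    rw [Units.val_mul, Units.val_mul] at h
    rw [Matrix.smul_apply, smul_eq_mul] at h
    rw [hD, Matrix.diagonal_mul, Matrix.mul_diagonal] at h
    exact h
  have ha0 : a ≠ 0 ∧ b ≠ 0 := by
    constructor <;> intro h0
    · have hdet := det_ne_zero Dg
      rw [hD] at hdet
      simp [Matrix.diagonal, h0] at hdet
    · have hdet := det_ne_zero Dg
      rw [hD] at hdet
      simp [Matrix.diagonal, h0] at hdet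
  obtain ⟨ha, hb⟩ := ha0
  have e00 := E 0 0
  have e01 := E 0 1
  have e10 := E 1 0
  have e11 := E 1 1
  simp only [Matrix.cons_val_zero, Matrix.cons_val_one, Matrix.head_cons] at e00 e01 e10 e11
  by_cases hc1 : c = 1
  · subst hc1
    left
    constructor
    · -- a * M01 = 1 * (M01 * b)
      have : (a - b) * (M : Matrix (Fin 2) (Fin 2) k) 0 1 = 0 := by linear_combination e01
      rcases mul_eq_zero.mp this with h | h
      · exact absurd (by linear_combination h) hab
      · exact h
    · have : (b - a) * (M : Matrix (Fin 2) (Fin 2) k) 1 0 = 0 := by linear_combination e10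
      rcases mul_eq_zero.mp this with h | h
      · exact absurd (show a = b by linear_combination -h) hab
      · exact h
  · right
    have hM00 : (M : Matrix (Fin 2) (Fin 2) k) 0 0 = 0 := by
      have : (M : Matrix (Fin 2) (Fin 2) k) 0 0 * (a * (1 - c)) = 0 := by linear_combination e00
      rcases mul_eq_zero.mp this with h | h
      · exact h
      · rcases mul_eq_zero.mp h with h' | h'
        · exact absurd h' ha
        · exact absurd (show c = 1 by linear_combination -h') hc1
    have hM11 : (M : Matrix (Fin 2) (Fin 2) k) 1 1 = 0 := by
      have : (M : Matrix (Fin 2) (Fin 2) k) 1 1 * (b * (1 - c)) = 0 := by linear_combination e11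
      rcases mul_eq_zero.mp this with h | h
      · exact h
      · rcases mul_eq_zero.mp h with h' | h'
        · exact absurd h' hb
        · exact absurd (show c = 1 by linear_combination -h') hc1
    refine ⟨hM00, hM11, ?_⟩
    have hdet := det_ne_zero M
    rw [hM00, hM11] at hdet
    have h0110 : (M : Matrix (Fin 2) (Fin 2) k) 0 1 ≠ 0 ∧
        (M : Matrix (Fin 2) (Fin 2) k) 1 0 ≠ 0 := by
      constructor <;> intro h0 <;> apply hdet <;> rw [h0] <;> ring
    have hacb : a = c * b := by
      have h := e01
      rcases mul_eq_zero.mp (show (a - c * b) * (M : Matrix (Fin 2) (Fin 2) k) 0 1 = 0 by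
        linear_combination h) with h' | h'
      · linear_combination h'
      · exact absurd h' h0110.1
    have hbca : b = c * a := by
      rcases mul_eq_zero.mp (show (b - c * a) * (M : Matrix (Fin 2) (Fin 2) k) 1 0 = 0 by
        linear_combination e10) with h' | h'
      · linear_combination h'
      · exact absurd h' h0110.2
    have hc2 : (c - 1) * (c + 1) = 0 := by
      have : a = c * (c * a) := by rw [← hbca, ← hacb]
      have h2 : a * ((c - 1) * (c + 1)) = 0 := by linear_combination -this
      rcases mul_eq_zero.mp h2 with h' | h'
      · exact absurd h' ha
      · exact h'
    rcases mul_eq_zero.mp hc2 with h' | h'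
    · exact absurd (show c = 1 by linear_combination h') hc1
    · rw [hbca, show c = -1 by linear_combination h']
      ring

end PGL2Aux

namespace PGL2Aux

variable {k : Type*} [Field k]

/-- conjugating a diagonal class by an antidiagonal class inverts it -/
lemma conj_adiag_diag {x y : PGL2 k} (hx : DiagCl x) (hy : ADiagCl y) :
    y * x * y = x⁻¹ := by
  obtain ⟨M, rfl, hM1, hM2⟩ := hx
  obtain ⟨N, rfl, hN1, hN2⟩ := hy
  have hMa : (M : Matrix (Fin 2) (Fin 2) k) 0 0 ≠ 0 ∧ (M : Matrix (Fin 2) (Fin 2) k) 1 1 ≠ 0 :=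
    diag_entries_ne_zero hM1 hM2
  have hNx : (N : Matrix (Fin 2) (Fin 2) k) 0 1 ≠ 0 := by
    intro h
    apply det_ne_zero N; rw [hN1, hN2, h]; ring
  have hNy : (N : Matrix (Fin 2) (Fin 2) k) 1 0 ≠ 0 := by
    intro h
    apply det_ne_zero N; rw [hN1, hN2, h]; ring
  rw [← mk_mul, ← mk_mul, ← mk_inv, mk_eq_mk_iff]
  set m00 := (M : Matrix (Fin 2) (Fin 2) k) 0 0
  set m11 := (M : Matrix (Fin 2) (Fin 2) k) 1 1
  set x01 := (N : Matrix (Fin 2) (Fin 2) k) 0 1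
  set y10 := (N : Matrix (Fin 2) (Fin 2) k) 1 0
  refine ⟨(m00 * m11 * (x01 * y10))⁻¹, by
    simp only [ne_eq, inv_eq_zero]
    exact fun h => by
      rcases mul_eq_zero.mp h with h | h
      · rcases mul_eq_zero.mp h with h | h
        · exact hMa.1 h
        · exact hMa.2 h
      · rcases mul_eq_zero.mp h with h | h
        · exact hNx h
        · exact hNy h, ?_⟩
  obtain ⟨hm0, hm1⟩ := hMa
  ext i j
  rw [Matrix.GeneralLinearGroup.coe_inv, Matrix.inv_def, Matrix.adjugate_fin_two,
    Matrix.det_fin_two, hM1, hM2, Ring.inverse_eq_inv']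
  fin_cases i <;> fin_cases j <;>
    simp only [Fin.zero_eta, Fin.mk_one, Fin.isValue, Matrix.smul_apply, Matrix.of_apply,
      Matrix.cons_val', Matrix.cons_val_zero,
      Matrix.cons_val_one, Matrix.head_cons, Matrix.empty_val', Matrix.cons_val_fin_one,
      Matrix.head_fin_const, smul_eq_mul, mul_entry, hM1, hM2, hN1, hN2] <;>
    field_simp [hm0, hm1, hNx, hNy,
      show (M : Matrix (Fin 2) (Fin 2) k) 0 0 ≠ 0 from hm0,
      show (M : Matrix (Fin 2) (Fin 2) k) 1 1 ≠ 0 from hm1] <;> ring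

end PGL2Aux

namespace PGL2Aux

theorem dihedral_recog {G : Type*} [Group G] [Finite G] (c s : G) (n : ℕ) (hn : n ≠ 0)
    (hc : orderOf c = n) (hs : s ∉ Subgroup.zpowers c) (hs2 : s * s = 1)
    (hconj : s * c * s = c⁻¹)
    (hcov : ∀ x : G, x ∈ Subgroup.zpowers c ∨ s * x ∈ Subgroup.zpowers c) :
    Nonempty (G ≃* DihedralGroup n) := by
  have : NeZero n := ⟨hn⟩
  have hsinv : s⁻¹ = s := by
    rw [← mul_one s⁻¹, ← hs2, ← mul_assoc, inv_mul_cancel, one_mul]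
  have hpow : ∀ i j : ZMod n, c ^ (i + j).val = c ^ i.val * c ^ j.val := by
    intro i j
    rw [← pow_add]
    apply pow_eq_pow_iff_modEq.mpr
    rw [hc, ZMod.val_add]
    exact Nat.mod_modEq _ n
  have hconj' : ∀ m : ℕ, s * c ^ m * s = (c ^ m)⁻¹ := by
    intro m
    have h := conj_pow (i := m) (a := s) (b := c)
    rw [hsinv, hconj] at h
    rw [← h, inv_pow]
  have hsc : ∀ m : ℕ, c ^ m * s = s * (c ^ m)⁻¹ := by
    intro m
    have h := congrArg (fun t => s * t) (hconj' m)
    rw [← mul_assoc, ← mul_assoc, hs2, one_mul] at h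
    exact h
  have hkey : ∀ i j : ZMod n, c ^ ((j - i).val) = (c ^ i.val)⁻¹ * c ^ j.val := by
    intro i j
    rw [eq_inv_mul_iff_mul_eq, ← hpow]
    congr 1
    ring
  let f : DihedralGroup n → G := fun x =>
    match x with
    | DihedralGroup.r i => c ^ i.val
    | DihedralGroup.sr i => s * c ^ i.val
  have hf_r : ∀ i : ZMod n, f (DihedralGroup.r i) = c ^ i.val := fun _ => rfl
  have hf_sr : ∀ i : ZMod n, f (DihedralGroup.sr i) = s * c ^ i.val := fun _ => rfl
  have hmul : ∀ x y : DihedralGroup n, f (x * y) = f x * f y := by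
    intro x y
    rcases x with i | i <;> rcases y with j | j
    · rw [DihedralGroup.r_mul_r, hf_r, hf_r, hf_r, hpow]
    · rw [DihedralGroup.r_mul_sr, hf_sr, hf_r, hf_sr, hkey]
      have h1 : c ^ ZMod.val i * (s * c ^ ZMod.val j) = (c ^ ZMod.val i * s) * c ^ ZMod.val j := by
        group
      rw [h1, hsc, mul_assoc]
    · rw [DihedralGroup.sr_mul_r, hf_sr, hf_sr, hf_r, hpow, mul_assoc]
    · rw [DihedralGroup.sr_mul_sr, hf_r, hf_sr, hf_sr, hkey]
      have h1 : s * c ^ ZMod.val i * (s * c ^ ZMod.val j) =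
          s * (c ^ ZMod.val i * s) * c ^ ZMod.val j := by group
      rw [h1, hsc, ← mul_assoc, hs2, one_mul]
  have hcpow_mem : ∀ m : ℕ, c ^ m ∈ Subgroup.zpowers c := fun m =>
    Subgroup.pow_mem _ (Subgroup.mem_zpowers c) m
  have hval_inj : ∀ i j : ZMod n, c ^ i.val = c ^ j.val → i = j := by
    intro i j hij
    have := pow_eq_pow_iff_modEq.mp hij
    rw [hc] at this
    have h1 : i.val % n = j.val % n := this
    rw [Nat.mod_eq_of_lt (ZMod.val_lt i), Nat.mod_eq_of_lt (ZMod.val_lt j)] at h1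
    exact ZMod.val_injective n h1
  have hinj : Function.Injective f := by
    intro x y hxy
    rcases x with i | i <;> rcases y with j | j
    · rw [hf_r, hf_r] at hxy
      rw [hval_inj i j hxy]
    · exfalso
      rw [hf_r, hf_sr] at hxy
      apply hs
      have : s = c ^ i.val * (c ^ j.val)⁻¹ := by
        rw [hxy]; group
      rw [this]
      exact Subgroup.mul_mem _ (hcpow_mem _) (Subgroup.inv_mem _ (hcpow_mem _))
    · exfalso
      rw [hf_r, hf_sr] at hxy
      apply hs
      have : s = c ^ j.val * (c ^ i.val)⁻¹ := by
        rw [← hxy]; group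
      rw [this]
      exact Subgroup.mul_mem _ (hcpow_mem _) (Subgroup.inv_mem _ (hcpow_mem _))
    · rw [hf_sr, hf_sr] at hxy
      have := mul_left_cancel hxy
      rw [hval_inj i j this]
  have hredpow : ∀ m : ℕ, c ^ (ZMod.val (m : ZMod n)) = c ^ m := by
    intro m
    apply pow_eq_pow_iff_modEq.mpr
    rw [hc, ZMod.val_natCast]
    exact Nat.mod_modEq _ n
  have hsurj : Function.Surjective f := by
    intro x
    rcases hcov x with hx | hx
    · rw [← mem_powers_iff_mem_zpowers] at hx
      obtain ⟨m, hm⟩ := hx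
      have hm' : c ^ m = x := hm
      exact ⟨DihedralGroup.r (m : ZMod n), by rw [hf_r, hredpow]; exact hm'⟩
    · rw [← mem_powers_iff_mem_zpowers] at hx
      obtain ⟨m, hm⟩ := hx
      have hm' : c ^ m = s * x := hm
      refine ⟨DihedralGroup.sr (m : ZMod n), ?_⟩
      rw [hf_sr, hredpow, hm', ← mul_assoc, hs2, one_mul]
  let F : DihedralGroup n →* G := {
    toFun := f
    map_one' := by
      rw [DihedralGroup.one_def, hf_r]
      simp
    map_mul' := hmul }
  exact ⟨(MulEquiv.ofBijective F ⟨hinj, hsurj⟩).symm⟩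

end PGL2Aux


open PGL2Aux

/-- Let `k` be an algebraically closed field of characteristic `p > 0` and `ℓ ≠ p` a prime.
A finite subgroup of `PGL₂(k)` of `ℓ`-power order is cyclic, or `ℓ = 2` and it is dihedral
of `2`-power order. -/
theorem pgl2_l_subgroup_cyclic_or_dihedral (k : Type*) [Field k] [IsAlgClosed k]
    (p : ℕ) (hp : p.Prime) [CharP k p] (l : ℕ) (hl : l.Prime) (hlp : l ≠ p)
    (H : Subgroup (PGL2 k)) (hfin : Finite H) (hcard : ∃ m : ℕ, Nat.card H = l ^ m) :
    IsCyclic H ∨ (l = 2 ∧ ∃ m : ℕ, Nonempty (H ≃* DihedralGroup (2 ^ m))) := by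
  classical
  obtain ⟨m, hm⟩ := hcard
  haveI : Finite H := hfin
  by_cases htriv : Nat.card H = 1
  · left
    haveI : Subsingleton H := (Nat.card_eq_one_iff_unique.mp htriv).1
    exact isCyclic_of_subsingleton
  haveI hFact : Fact l.Prime := ⟨hl⟩
  have hPG : IsPGroup l H := IsPGroup.of_card hm
  haveI hnt : Nontrivial H := by
    have h1 : 1 < Nat.card H := lt_of_le_of_ne (Nat.one_le_iff_ne_zero.mpr Nat.card_pos.ne')
      (Ne.symm htriv)
    exact Finite.one_lt_card_iff_nontrivial.mp h1
  haveI hZnt : Nontrivial (Subgroup.center H) := hPG.center_nontrivial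
  haveI : Fintype (Subgroup.center H) := Fintype.ofFinite _
  have hPGZ : IsPGroup l (Subgroup.center H) := hPG.to_subgroup _
  obtain ⟨t, hcardZ⟩ := IsPGroup.iff_card.mp hPGZ
  have hdvd : l ∣ Nat.card (Subgroup.center H) := by
    rw [hcardZ]
    refine dvd_pow_self l fun h0 => ?_
    rw [h0, pow_zero] at hcardZ
    haveI := (Nat.card_eq_one_iff_unique.mp hcardZ).1
    exact false_of_nontrivial_of_subsingleton (↥(Subgroup.center H))
  obtain ⟨z, hz⟩ := exists_prime_orderOf_dvd_card (G := ↥(Subgroup.center H)) l (by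
    rwa [← Nat.card_eq_fintype_card])
  have hg : orderOf (z : H) = l := by
    rw [← hz]
    exact orderOf_injective (Subgroup.center H).subtype Subtype.coe_injective z
  set x : PGL2 k := ((z : H) : PGL2 k) with hxdef
  have hx : orderOf x = l := by
    rw [← hg]
    exact orderOf_injective H.subtype Subtype.coe_injective (z : H)
  have hxcomm : ∀ h : H, (h : PGL2 k) * x = x * (h : PGL2 k) := by
    intro h
    have hzc := Subgroup.mem_center_iff.mp z.2 h
    exact congrArg Subtype.val hzc
  have hlpk : (l : k) ≠ 0 := by
    intro h0
    rw [CharP.cast_eq_zero_iff k p] at h0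
    exact hlp ((Nat.prime_dvd_prime_iff_eq hp hl).mp h0).symm
  obtain ⟨A, hA⟩ := mk_surjective x
  have hAl : A ^ l ∈ Subgroup.center (GL (Fin 2) k) := by
    rw [← QuotientGroup.eq_one_iff]
    show mk (A ^ l) = 1
    rw [mk_pow, hA, ← hx, pow_orderOf_eq_one]
  obtain ⟨c, hc⟩ := center_is_scalar _ hAl
  obtain ⟨μ, hμ⟩ := IsAlgClosed.exists_pow_nat_eq (c : k) hl.pos
  have hμ0 : μ ≠ 0 := by
    intro h
    rw [h, zero_pow hl.ne_zero] at hμ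
    exact c.ne_zero hμ.symm
  set ν : kˣ := (Units.mk0 μ hμ0)⁻¹ with hν
  set B : GL (Fin 2) k := sHom ν * A with hB
  have hBl : B ^ l = 1 := by
    have hcomm : Commute (sHom ν) A :=
      (Subgroup.mem_center_iff.mp (sHom_mem_center ν) A).symm
    rw [hB, hcomm.mul_pow, ← MonoidHom.map_pow, hc, ← MonoidHom.map_mul]
    have hν1 : ν ^ l * c = 1 := by
      ext
      push_cast [hν]
      rw [← hμ]
      field_simp
      rw [Units.val_mk0, one_div, inv_pow, inv_mul_cancel₀ (pow_ne_zero _ hμ0)]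
    rw [hν1, MonoidHom.map_one]
  have hmkB : mk B = x := by
    rw [hB, ← hA]
    rw [show mk (sHom ν * A) = mk (sHom ν) * mk A from rfl]
    have h2 : mk (sHom ν) = (1 : PGL2 k) := (QuotientGroup.eq_one_iff _).mpr (sHom_mem_center ν)
    rw [h2, one_mul]
  have hBns : ∀ cc : k, (B : Matrix (Fin 2) (Fin 2) k) ≠ cc • 1 := by
    intro cc hcc
    have h1 : mk B = 1 := by
      rw [mk_eq_one_iff]
      exact ⟨cc, GL_ne_zero B cc hcc, hcc⟩
    rw [hmkB] at h1
    rw [h1, orderOf_one] at hx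
    exact hl.one_lt.ne hx
  obtain ⟨P, a, b, ha0, hb0, hab, hal, hbl, hconjP⟩ := diagonalize l hl.ne_zero hlpk B hBl hBns
  -- conjugate the subgroup
  set e : PGL2 k ≃* PGL2 k := (MulAut.conj ((mk P)⁻¹) : MulAut (PGL2 k)) with he
  set H' : Subgroup (PGL2 k) := Subgroup.map e.toMonoidHom H with hH'
  let eH : H ≃* H' := e.subgroupMap H
  haveI hfin' : Finite H' := Finite.of_equiv _ eH.toEquiv
  have hcard' : Nat.card H' = l ^ m := by
    rw [← Nat.card_congr eH.toEquiv]
    exact hm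
  set Dg : GL (Fin 2) k := P⁻¹ * B * P with hDgdef
  have hDg : mk Dg = e x := by
    have h1 : mk Dg = (mk P)⁻¹ * mk B * mk P := rfl
    rw [h1, hmkB, he]
    rw [MulAut.conj_apply, inv_inv]
  have hcomm' : ∀ y ∈ H', y * mk Dg = mk Dg * y := by
    intro y hy
    obtain ⟨h, hh, rfl⟩ := hy
    rw [hDg]
    have hcx : h * x = x * h := hxcomm ⟨h, hh⟩
    show e.toMonoidHom h * e.toMonoidHom x = e.toMonoidHom x * e.toMonoidHom h
    rw [← _root_.map_mul, ← _root_.map_mul, hcx]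
  have hclass : ∀ y ∈ H', DiagCl y ∨ (ADiagCl y ∧ b = -a) := by
    intro y hy
    obtain ⟨M, hM⟩ := mk_surjective y
    have hcm : mk M * mk Dg = mk Dg * mk M := by
      rw [hM]
      exact hcomm' y hy
    rcases centralizer_step hab hconjP hcm with ⟨h1, h2⟩ | ⟨h1, h2, h3⟩
    · exact Or.inl ⟨M, hM, h1, h2⟩
    · exact Or.inr ⟨⟨M, hM, h1, h2⟩, h3⟩
  by_cases hAllDiag : ∀ y : H', DiagCl (y : PGL2 k)
  · left
    haveI : IsCyclic H' := isCyclic_aux H'.subtype Subtype.coe_injective hAllDiag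
    exact isCyclic_of_surjective eH.symm.toMonoidHom eH.symm.surjective
  · push_neg at hAllDiag
    obtain ⟨y0, hy0⟩ := hAllDiag
    obtain ⟨hy0ad, hba⟩ := (hclass y0 y0.2).resolve_left hy0
    have hl2 : l = 2 := by
      by_contra h2
      have hodd : Odd l := hl.odd_of_ne_two h2
      rw [hba, hodd.neg_pow, hal] at hbl
      have hm1 : (-1 : k) = 1 := by linear_combination hbl
      exact hab (show a = b by rw [hba]; linear_combination -a * hm1)
    right
    refine ⟨hl2, ?_⟩
    -- the diagonal subgroup of H'
    set K : Subgroup H' := {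
      carrier := {y : H' | DiagCl (y : PGL2 k)}
      one_mem' := diag_one
      mul_mem' := fun ha hb => diag_mul ha hb
      inv_mem' := fun ha => diag_inv ha } with hK
    haveI : IsCyclic K := by
      apply isCyclic_aux (H'.subtype.comp K.subtype)
      · exact Subtype.coe_injective.comp Subtype.coe_injective
      · exact fun g => g.2
    obtain ⟨c0, hc0⟩ := IsCyclic.exists_generator (α := K)
    set cH : H' := (c0 : H') with hcH
    have hcHdiag : DiagCl (cH : PGL2 k) := c0.2
    have hKz : ∀ w : H', DiagCl (w : PGL2 k) → w ∈ Subgroup.zpowers cH := by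
      intro w hw
      obtain ⟨mz, hmz⟩ := hc0 ⟨w, hw⟩
      refine ⟨mz, ?_⟩
      have h1 := congrArg Subtype.val hmz
      rw [SubgroupClass.coe_zpow] at h1
      exact h1
    have hy0K : y0 ∉ Subgroup.zpowers cH := by
      intro hmem
      have hle : Subgroup.zpowers cH ≤ K := Subgroup.zpowers_le.mpr c0.2
      exact hy0 (hle hmem)
    obtain ⟨φ⟩ := dihedral_recog cH y0 (orderOf cH) (orderOf_pos cH).ne'
      rfl hy0K
      (Subtype.ext (adiag_sq hy0ad))
      (Subtype.ext (conj_adiag_diag hcHdiag hy0ad))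
      (by
        intro yy
        by_cases hyy : DiagCl (yy : PGL2 k)
        · exact Or.inl (hKz yy hyy)
        · obtain ⟨hyyad, _⟩ := (hclass yy yy.2).resolve_left hyy
          refine Or.inr (hKz _ ?_)
          exact adiag_mul_adiag hy0ad hyyad)
    have hdvdo : orderOf cH ∣ 2 ^ m := by
      have h1 : orderOf cH ∣ Nat.card H' := orderOf_dvd_natCard cH
      rwa [hcard', hl2] at h1
    obtain ⟨j, _, hj⟩ := (Nat.dvd_prime_pow Nat.prime_two).mp hdvdo
    rw [hj] at φ
    exact ⟨j, ⟨eH.trans φ⟩⟩
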